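/- Let G be a group acting by automorphisms on a tree T, let x₀ be a vertex, and for a vertex x let 𝟙_x ∈ ℓ²(oriented edges of T) be the characteristic function of the set of oriented edges pointing towards x (i.e., edges e with d(e₊, x) < d(e₋, x)). Define b(g) = 𝟙_{g·x₀} − 𝟙_{x₀}. Then b(g) ∈ ℓ²(E) and ‖b(g)‖² = 2·d(g·x₀, x₀) for every g ∈ G. -/

import Mathlib

open SimpleGraph

open Classical in
/-- `towardInd T x` is the characteristic function (on oriented edges, modeled as adjacent
ordered pairs of vertices) of the set of oriented edges pointing towards the vertex `x`,
i.e. pairs `(p.1, p.2)` with `T.Adj p.1 p.2` and `d(p.2, x) < d(p.1, x)`. -/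
noncomputable def towardInd {V : Type*} (T : SimpleGraph V) (x : V) : V × V → ℝ :=
  fun p => if T.Adj p.1 p.2 ∧ T.dist p.2 x < T.dist p.1 x then 1 else 0

section Aux

variable {V : Type*} {T : SimpleGraph V}

open Classical in
lemma towardInd_apply (T : SimpleGraph V) (x a b : V) :
    towardInd T x (a, b) = if T.Adj a b ∧ T.dist b x < T.dist a x then 1 else 0 := rfl

/-- In a tree, every path has length equal to the distance between its endpoints. -/
lemma tree_path_length_eq_dist (hT : T.IsTree) {a b : V} (p : T.Walk a b) (hp : p.IsPath) :
    p.length = T.dist a b := by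
  obtain ⟨q, hq, hql⟩ := hT.isConnected.exists_path_of_dist a b
  obtain ⟨r, hr, hun⟩ := hT.existsUnique_path a b
  rw [hun p hp, ← hun q hq, hql]

lemma tree_dist_split (hT : T.IsTree) {a u w : V} (p : T.Walk a u) (hp : p.IsPath)
    (hw : w ∈ p.support) : T.dist a w + T.dist w u = T.dist a u := by
  classical
  have hl := tree_path_length_eq_dist hT p hp
  have h1 : T.dist a w ≤ (p.takeUntil w hw).length := dist_le _
  have h2 : T.dist w u ≤ (p.dropUntil w hw).length := dist_le _
  have h3 : (p.takeUntil w hw).length + (p.dropUntil w hw).length = p.length := by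
    rw [← Walk.length_append, Walk.take_spec]
  have h4 := hT.isConnected.dist_triangle (u := a) (v := w) (w := u)
  omega

lemma concat_isPath {a u v : V} (p : T.Walk a u) (h : T.Adj u v) (hp : p.IsPath)
    (hv : v ∉ p.support) : (p.concat h).IsPath := by
  rw [← Walk.isPath_reverse_iff, Walk.reverse_concat]
  exact hp.reverse.cons (by simpa [Walk.support_reverse] using hv)

/-- In a tree, the distances of any vertex to the two endpoints of an edge differ by one. -/
lemma tree_adj_dist (hT : T.IsTree) {u v : V} (huv : T.Adj u v) (a : V) :
    T.dist a v = T.dist a u + 1 ∨ T.dist a u = T.dist a v + 1 := by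
  obtain ⟨q, hq, hql⟩ := hT.isConnected.exists_path_of_dist a u
  by_cases hv : v ∈ q.support
  · right
    have h1 := tree_dist_split hT q hq hv
    have hvu : T.dist v u = 1 := dist_eq_one_iff_adj.mpr huv.symm
    omega
  · left
    have h2 := tree_path_length_eq_dist hT (q.concat huv) (concat_isPath q huv hq hv)
    rw [Walk.length_concat, hql] at h2
    omega

lemma tree_mixed (hT : T.IsTree) {u v a b : V} (huv : T.Adj u v) (hab : T.Adj a b)
    (ha : T.dist a v = T.dist a u + 1) (hb : T.dist b u = T.dist b v + 1) :
    a = u ∧ b = v := by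
  have hab1 : T.dist a b = 1 := dist_eq_one_iff_adj.mpr hab
  have hba1 : T.dist b a = 1 := dist_eq_one_iff_adj.mpr hab.symm
  have huv1 : T.dist u v = 1 := dist_eq_one_iff_adj.mpr huv
  have t1 := hT.isConnected.dist_triangle (u := a) (v := b) (w := v)
  have t2 := hT.isConnected.dist_triangle (u := b) (v := a) (w := u)
  have hbv : T.dist b v = T.dist a u := by omega
  set k := T.dist a u with hk
  rcases Nat.eq_zero_or_pos k with hk0 | hkpos
  · have hau : a = u := (hT.isConnected.dist_eq_zero_iff).mp hk0
    have : b = v := (hT.isConnected.dist_eq_zero_iff).mp (by omega)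
    exact ⟨hau, this⟩
  · exfalso
    obtain ⟨q, hq, hql⟩ := hT.isConnected.exists_path_of_dist a u
    obtain ⟨r, hr, hrl⟩ := hT.isConnected.exists_path_of_dist b v
    have hvq : v ∉ q.support := by
      intro hmem
      have := tree_dist_split hT q hq hmem
      have : T.dist v u = 1 := dist_eq_one_iff_adj.mpr huv.symm
      omega
    have har : a ∉ r.support := by
      intro hmem
      have := tree_dist_split hT r hr hmem
      omega
    have hP1 : (q.concat huv).IsPath := concat_isPath q huv hq hvq
    have hP2 : (Walk.cons hab r).IsPath := hr.cons har
    obtain ⟨r0, _, hun⟩ := hT.existsUnique_path a v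
    have hEq : q.concat huv = Walk.cons hab r := by
      rw [hun _ hP1, hun _ hP2]
    have hb1 : b ∈ (Walk.cons hab r).support := by
      rw [Walk.support_cons]
      exact List.mem_cons_of_mem _ r.start_mem_support
    rw [← hEq, Walk.support_concat] at hb1
    rcases List.mem_append.mp hb1 with hbq | hbv'
    · have := tree_dist_split hT q hq hbq
      omega
    · have : b = v := by simpa using hbv'
      subst this
      omega

open Classical in
/-- The difference of the toward-indicators of the two endpoints of an edge. -/
lemma edge_diff (hT : T.IsTree) {u v : V} (huv : T.Adj u v) (p : V × V) :
    towardInd T v p - towardInd T u p =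
      if p = (u, v) then 1 else if p = (v, u) then -1 else 0 := by
  obtain ⟨a, b⟩ := p
  have huv1 : T.dist u v = 1 := dist_eq_one_iff_adj.mpr huv
  have hvu1 : T.dist v u = 1 := dist_eq_one_iff_adj.mpr huv.symm
  have huu : T.dist u u = 0 := SimpleGraph.dist_self
  have hvv : T.dist v v = 0 := SimpleGraph.dist_self
  rw [towardInd_apply, towardInd_apply]
  by_cases hab : T.Adj a b
  · rcases tree_adj_dist hT huv a with ha | ha <;>
    rcases tree_adj_dist hT huv b with hb | hb
    · -- both on u side
      have h1 : ¬ ((a, b) = ((u : V), v)) := by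
        intro hc
        rw [Prod.mk.injEq] at hc
        obtain ⟨hc1, hc2⟩ := hc
        subst hc1; subst hc2
        omega
      have h2 : ¬ ((a, b) = ((v : V), u)) := by
        intro hc
        rw [Prod.mk.injEq] at hc
        obtain ⟨hc1, hc2⟩ := hc
        subst hc1; subst hc2
        omega
      rw [if_neg h1, if_neg h2]
      by_cases hlt : T.dist b u < T.dist a u
      · rw [if_pos ⟨hab, by omega⟩, if_pos ⟨hab, hlt⟩]; ring
      · rw [if_neg (by rintro ⟨-, hc⟩; omega), if_neg (by rintro ⟨-, hc⟩; omega)]; ring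
    · -- a on u side, b on v side : (a,b) = (u,v)
      obtain ⟨h1, h2⟩ := tree_mixed hT huv hab ha hb
      subst h1; subst h2
      rw [if_pos rfl]
      rw [if_pos ⟨hab, by omega⟩, if_neg (by rintro ⟨-, hc⟩; omega)]
      ring
    · -- a on v side, b on u side : (a,b) = (v,u)
      obtain ⟨h1, h2⟩ := tree_mixed hT huv hab.symm hb ha
      -- h1 : b = u, h2 : a = v
      have e1 : T.dist a v = 0 := by rw [h2]; exact hvv
      have e2 : T.dist b v = 1 := by rw [h1]; exact huv1
      have e3 : T.dist a u = 1 := by rw [h2]; exact hvu1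
      have e4 : T.dist b u = 0 := by rw [h1]; exact huu
      have hne1 : ¬ ((a, b) = ((u : V), v)) := by
        intro hc
        rw [Prod.mk.injEq] at hc
        exact hab.ne (hc.1.trans h1.symm)
      have heq : ((a : V), b) = ((v : V), u) := by
        rw [Prod.mk.injEq]; exact ⟨h2, h1⟩
      rw [if_neg hne1, if_pos heq]
      rw [if_neg (by rintro ⟨-, hc⟩; omega), if_pos ⟨hab, by omega⟩]
      ring
    · -- both on v side
      have h1 : ¬ ((a, b) = ((u : V), v)) := by
        intro hc
        rw [Prod.mk.injEq] at hc
        obtain ⟨hc1, hc2⟩ := hc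
        subst hc1; subst hc2
        omega
      have h2 : ¬ ((a, b) = ((v : V), u)) := by
        intro hc
        rw [Prod.mk.injEq] at hc
        obtain ⟨hc1, hc2⟩ := hc
        subst hc1; subst hc2
        omega
      rw [if_neg h1, if_neg h2]
      by_cases hlt : T.dist b u < T.dist a u
      · rw [if_pos ⟨hab, by omega⟩, if_pos ⟨hab, hlt⟩]; ring
      · rw [if_neg (by rintro ⟨-, hc⟩; omega), if_neg (by rintro ⟨-, hc⟩; omega)]; ring
  · have h1 : ¬ ((a, b) = ((u : V), v)) := by
      intro hc; rw [Prod.mk.injEq] at hc; exact hab (hc.1 ▸ hc.2 ▸ huv)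
    have h2 : ¬ ((a, b) = ((v : V), u)) := by
      intro hc; rw [Prod.mk.injEq] at hc; exact hab (hc.1 ▸ hc.2 ▸ huv.symm)
    rw [if_neg h1, if_neg h2]
    rw [if_neg (by rintro ⟨hc, -⟩; exact hab hc), if_neg (by rintro ⟨hc, -⟩; exact hab hc)]
    ring

/-- Main lemma: for any two vertices `x y` of a tree. -/
lemma main_lemma (hT : T.IsTree) (x y : V) :
    Summable (fun p : V × V => (towardInd T x p - towardInd T y p) ^ 2) ∧
    ∑' p : V × V, (towardInd T x p - towardInd T y p) ^ 2
      = 2 * (T.dist x y : ℝ) := by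
  classical
  suffices H : ∀ n (x y : V), T.dist x y = n →
      Summable (fun p : V × V => (towardInd T x p - towardInd T y p) ^ 2) ∧
      ∑' p : V × V, (towardInd T x p - towardInd T y p) ^ 2 = 2 * (T.dist x y : ℝ) from
    H _ x y rfl
  intro n
  induction n with
  | zero =>
    intro x y hd
    have hxy : x = y := hT.isConnected.dist_eq_zero_iff.mp hd
    subst hxy
    constructor
    · simpa using summable_zero
    · simp [hd]
  | succ n ih =>
    intro x y hd
    -- find a neighbor v of y with dist x v = n
    rw [dist_comm] at hd
    obtain ⟨q, hq, hql⟩ := hT.isConnected.exists_path_of_dist y x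
    rw [hd] at hql
    cases q with
    | nil => simp at hql
    | @cons _ v _ h r =>
      rw [Walk.length_cons] at hql
      have hrl : r.length = n := by omega
      have hdvx : T.dist v x = n := by
        have h1 : T.dist v x ≤ n := hrl ▸ dist_le r
        have h2 : T.dist y x ≤ T.dist y v + T.dist v x := hT.isConnected.dist_triangle
        have h3 : T.dist y v = 1 := dist_eq_one_iff_adj.mpr h
        omega
      have hdyx : T.dist y x = n + 1 := hd
      have hyv1 : T.dist y v = 1 := dist_eq_one_iff_adj.mpr h
      have hvy1 : T.dist v y = 1 := dist_eq_one_iff_adj.mpr h.symm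
      have hvv0 : T.dist v v = 0 := SimpleGraph.dist_self
      have hyy0 : T.dist y y = 0 := SimpleGraph.dist_self
      obtain ⟨ihs, iht⟩ := ih x v (by rw [dist_comm]; exact hdvx)
      have hB := edge_diff hT h
      -- values of A at the two special points
      have hA1 : towardInd T x (y, v) = towardInd T v (y, v) := by
        rw [towardInd_apply, towardInd_apply,
          if_pos ⟨h, show T.dist v x < T.dist y x by omega⟩,
          if_pos ⟨h, show T.dist v v < T.dist y v by omega⟩]
      have hA2 : towardInd T x (v, y) = towardInd T v (v, y) := by
        rw [towardInd_apply, towardInd_apply,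
          if_neg (by rintro ⟨-, hc⟩; omega),
          if_neg (by rintro ⟨-, hc⟩; omega)]
      have hne : ((y : V), v) ≠ ((v : V), y) := by
        intro hc; rw [Prod.mk.injEq] at hc; exact h.ne hc.1
      -- pointwise decomposition
      have key : ∀ p : V × V, (towardInd T x p - towardInd T y p) ^ 2 =
          (towardInd T x p - towardInd T v p) ^ 2 +
            (towardInd T v p - towardInd T y p) ^ 2 := by
        intro p
        rcases eq_or_ne p ((y : V), v) with hp | hp
        · subst hp
          rw [hA1]; ring
        · rcases eq_or_ne p ((v : V), y) with hp2 | hp2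
          · subst hp2
            rw [hA2]; ring
          · have hBv := hB p
            rw [if_neg hp, if_neg hp2, sub_eq_zero] at hBv
            rw [hBv]; ring
      -- the B part
      have hBsupp : ∀ p : V × V, p ∉ ({((y : V), v), ((v : V), y)} : Finset (V × V)) →
          (towardInd T v p - towardInd T y p) ^ 2 = 0 := by
        intro p hp
        simp only [Finset.mem_insert, Finset.mem_singleton, not_or] at hp
        have hBv := hB p
        rw [if_neg hp.1, if_neg hp.2] at hBv
        rw [hBv]; ring
      have hBsum : Summable (fun p : V × V => (towardInd T v p - towardInd T y p) ^ 2) :=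
        summable_of_ne_finset_zero hBsupp
      have hBtsum : ∑' p : V × V, (towardInd T v p - towardInd T y p) ^ 2 = 2 := by
        rw [tsum_eq_sum hBsupp, Finset.sum_insert (by simpa using hne),
          Finset.sum_singleton]
        have h1 := hB ((y : V), v); rw [if_pos rfl] at h1
        have h2 := hB ((v : V), y); rw [if_neg hne.symm, if_pos rfl] at h2
        rw [h1, h2]; norm_num
      have hfun : (fun p : V × V => (towardInd T x p - towardInd T y p) ^ 2) =
          (fun p : V × V => (towardInd T x p - towardInd T v p) ^ 2 +
            (towardInd T v p - towardInd T y p) ^ 2) := funext key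
      have hxy : T.dist x y = n + 1 := by rw [dist_comm]; exact hdyx
      have hxv : T.dist x v = n := by rw [dist_comm]; exact hdvx
      constructor
      · rw [hfun]
        exact ihs.add hBsum
      · rw [hfun, Summable.tsum_add ihs hBsum, iht, hBtsum, hxv, hxy]
        push_cast; ring

end Aux

/-- The Haagerup cocycle `b(g) = 𝟙_{g·x₀} − 𝟙_{x₀}` is square-summable, with
`‖b(g)‖² = 2·d(g·x₀, x₀)`. -/
theorem stmt1 {V : Type*} (T : SimpleGraph V) (hT : T.IsTree) {G : Type*} [Group G]
    [MulAction G V] (hact : ∀ (g : G) (a b : V), T.Adj a b ↔ T.Adj (g • a) (g • b))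
    (x₀ : V) (g : G) :
    Summable (fun p : V × V => (towardInd T (g • x₀) p - towardInd T x₀ p) ^ 2) ∧
    ∑' p : V × V, (towardInd T (g • x₀) p - towardInd T x₀ p) ^ 2
      = 2 * (T.dist (g • x₀) x₀ : ℝ) := by
  exact main_lemma hT (g • x₀) x₀
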